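/- For any nonempty word u over a finite alphabet, the piecewise minimality index satisfies ρ(u) = 1 + max{ r(v₁,a) + ℓ(a,v₂) : u = v₁·a·v₂ a factorization of u with a a letter }. -/

import Mathlib

variable {A : Type*}

/-- Simon's congruence of order `k`: `u` and `v` have the same subwords of length ≤ k. -/
def SimonCong (k : ℕ) (u v : List A) : Prop :=
  ∀ s : List A, s.length ≤ k → (s.Sublist u ↔ s.Sublist v)

/-- Subword distance `δ(u,v) = sup {k | u ∼ₖ v} ∈ ℕ∞`. -/
noncomputable def sdelta (u v : List A) : ℕ∞ :=
  sSup {d : ℕ∞ | ∃ k : ℕ, d = k ∧ SimonCong k u v}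

/-- Right side distance `r(u,t) = δ(u, u·t)`. -/
noncomputable def rdist (u t : List A) : ℕ∞ := sdelta u (u ++ t)

/-- Left side distance `ℓ(t,u) = δ(t·u, u)`. -/
noncomputable def ldist (t u : List A) : ℕ∞ := sdelta (t ++ u) u

/-- Piecewise complexity `h(u)`: least `n` such that any `v` with `u ∼ₙ v` equals `u`. -/
noncomputable def pcHeight (u : List A) : ℕ :=
  sInf {n : ℕ | ∀ v : List A, SimonCong n u v → v = u}

/-- `u` is `m`-reduced: no strict subword of `u` is `∼ₘ`-equivalent to `u`. -/
def Reduced (m : ℕ) (u : List A) : Prop :=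
  ∀ u' : List A, u'.Sublist u → u' ≠ u → ¬ SimonCong m u u'

/-- Piecewise minimality index `ρ(u)`: least `m` such that `u` is `m`-reduced. -/
noncomputable def pcRho (u : List A) : ℕ := sInf {m : ℕ | Reduced m u}

/-- An `A`-arch: contains every letter of `A` but no strict prefix does. -/
def IsArch (A : Type*) [Fintype A] (s : List A) : Prop :=
  (∀ a : A, a ∈ s) ∧ ∀ t : List A, t <+: s → t ≠ s → ∃ a : A, a ∉ t

/-- The infinite periodic word `u^ω`. -/
def omegaWord (u : List A) (hu : u ≠ []) (i : ℕ) : A :=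
  u.get ⟨i % u.length, Nat.mod_lt i (List.length_pos_iff.mpr hu)⟩

/-- The arch-jumping function `α` on `u^ω`: `α(i)` is the least `j > i` such that
every letter of `A` occurs among positions `i, …, j-1` of `u^ω`. -/
noncomputable def archJump (u : List A) (hu : u ≠ []) (i : ℕ) : ℕ :=
  sInf {j : ℕ | i < j ∧ ∀ a : A, ∃ m : ℕ, i ≤ m ∧ m < j ∧ omegaWord u hu m = a}

/-- `p` is an arch-period of `u` starting at `i`. -/
def IsArchPeriodAt (u : List A) (hu : u ≠ []) (i p : ℕ) : Prop :=
  0 < p ∧ ∃ k : ℕ, (archJump u hu)^[k + p] i ≡ (archJump u hu)^[k] i [MOD u.length]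

/-- The arch-period of `u`: the least arch-period starting at 0. -/
noncomputable def archPeriod (u : List A) (hu : u ≠ []) : ℕ :=
  sInf {p : ℕ | IsArchPeriodAt u hu 0 p}

/-- `K_u`: the least `k` with `α^{k+p}(0) ≡ α^k(0) (mod L)`. -/
noncomputable def archTransientIndex (u : List A) (hu : u ≠ []) : ℕ :=
  sInf {k : ℕ |
    (archJump u hu)^[k + archPeriod u hu] 0 ≡ (archJump u hu)^[k] 0 [MOD u.length]}

/-- The transient `T_u = α^{K_u}(0)`. -/
noncomputable def archTransient (u : List A) (hu : u ≠ []) : ℕ :=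
  (archJump u hu)^[archTransientIndex u hu] 0

/-- The span `Δ_u = α^{K_u+p_u}(0) − α^{K_u}(0)`. -/
noncomputable def archSpan (u : List A) (hu : u ≠ []) : ℕ :=
  (archJump u hu)^[archTransientIndex u hu + archPeriod u hu] 0 - archTransient u hu

/-- `u^n`: the `n`-fold concatenation of `u`. -/
def listPow (u : List A) (n : ℕ) : List A := (List.replicate n u).flatten

section Aux

theorem simonCong_zero (u v : List A) : SimonCong 0 u v := by
  intro s hs
  have : s = [] := List.eq_nil_of_length_eq_zero (Nat.le_zero.mp hs)
  subst this; simp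

theorem simonCong_mono {k j : ℕ} {u v : List A} (h : SimonCong k u v) (hj : j ≤ k) :
    SimonCong j u v := fun s hs => h s (hs.trans hj)

theorem rb_bound {k : ℕ} {v : List A} {a : A} (h : SimonCong k v (v ++ [a])) :
    k ≤ v.length := by
  by_contra hk
  push_neg at hk
  have h1 : (v ++ [a]).Sublist v :=
    (h (v ++ [a]) (by simp; omega)).mpr (List.Sublist.refl _)
  have := h1.length_le
  simp at this

theorem lb_bound {k : ℕ} {v : List A} {a : A} (h : SimonCong k (a :: v) v) :
    k ≤ v.length := by
  by_contra hk
  push_neg at hk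
  have h1 : (a :: v).Sublist v := (h (a :: v) (by simp; omega)).mp (List.Sublist.refl _)
  have := h1.length_le
  simp at this

noncomputable def Rnat (v : List A) (a : A) : ℕ := sSup {k | SimonCong k v (v ++ [a])}

noncomputable def Lnat (a : A) (v : List A) : ℕ := sSup {k | SimonCong k (a :: v) v}

theorem Rbdd (v : List A) (a : A) : BddAbove {k | SimonCong k v (v ++ [a])} :=
  ⟨v.length, fun _ hk => rb_bound hk⟩

theorem Lbdd (a : A) (v : List A) : BddAbove {k | SimonCong k (a :: v) v} :=
  ⟨v.length, fun _ hk => lb_bound hk⟩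

theorem Rnat_spec (v : List A) (a : A) : SimonCong (Rnat v a) v (v ++ [a]) :=
  Nat.sSup_mem ⟨0, simonCong_zero _ _⟩ (Rbdd v a)

theorem Lnat_spec (a : A) (v : List A) : SimonCong (Lnat a v) (a :: v) v :=
  Nat.sSup_mem ⟨0, simonCong_zero _ _⟩ (Lbdd a v)

theorem Rnat_max {k : ℕ} {v : List A} {a : A} (h : SimonCong k v (v ++ [a])) :
    k ≤ Rnat v a := le_csSup (Rbdd v a) h

theorem Lnat_max {k : ℕ} {v : List A} {a : A} (h : SimonCong k (a :: v) v) :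
    k ≤ Lnat a v := le_csSup (Lbdd a v) h

theorem sublist_step {t l : List A} (h : t.Sublist l) : t ≠ l →
    ∃ t' : List A, t.Sublist t' ∧ t'.Sublist l ∧ t'.length = t.length + 1 := by
  induction h with
  | slnil => exact fun hne => absurd rfl hne
  | cons b h ih =>
    exact fun _ => ⟨b :: _, List.sublist_cons_self b _, h.cons₂ b, rfl⟩
  | cons_cons b h ih =>
    rename_i l₁ l₂
    intro hne
    obtain ⟨t', h1, h2, h3⟩ := ih (fun he => hne (congrArg (List.cons b) he))
    exact ⟨b :: t', h1.cons₂ b, h2.cons₂ b, by simp [h3]⟩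

theorem sublist_extend {l : List A} : ∀ (d : ℕ) (t : List A), t.Sublist l →
    t.length + d ≤ l.length →
    ∃ m : List A, t.Sublist m ∧ m.Sublist l ∧ m.length = t.length + d := by
  intro d
  induction d with
  | zero => exact fun t h _ => ⟨t, List.Sublist.refl _, h, rfl⟩
  | succ d ih =>
    intro t ht hlen
    have hne : t ≠ l := by
      intro h; subst h; omega
    obtain ⟨t', h1, h2, h3⟩ := sublist_step ht hne
    obtain ⟨m, m1, m2, m3⟩ := ih t' h2 (by omega)
    exact ⟨m, h1.trans m1, m2, by omega⟩

theorem sublist_delete {u' u : List A} (h : u'.Sublist u) : u' ≠ u →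
    ∃ (v₁ : List A) (a : A) (v₂ : List A),
      u = v₁ ++ [a] ++ v₂ ∧ u'.Sublist (v₁ ++ v₂) := by
  induction h with
  | slnil => exact fun hne => absurd rfl hne
  | cons b h ih => exact fun _ => ⟨[], b, _, rfl, h⟩
  | cons_cons b h ih =>
    rename_i l₁ l₂
    intro hne
    obtain ⟨w₁, c, w₂, hw, hs⟩ := ih (fun he => hne (congrArg (List.cons b) he))
    exact ⟨b :: w₁, c, w₂, by rw [hw]; rfl, hs.cons₂ b⟩

theorem del_sublist (v₁ v₂ : List A) (a : A) :
    (v₁ ++ v₂).Sublist (v₁ ++ [a] ++ v₂) := by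
  rw [List.append_assoc]
  exact (List.sublist_cons_self a v₂).append_left v₁

theorem cong_del {v₁ v₂ : List A} {a : A} {R L : ℕ}
    (hR : SimonCong R v₁ (v₁ ++ [a])) (hL : SimonCong L (a :: v₂) v₂) :
    SimonCong (R + L) (v₁ ++ [a] ++ v₂) (v₁ ++ v₂) := by
  intro s hs
  constructor
  · intro hsub
    rw [List.append_assoc] at hsub
    obtain ⟨s₁, s₂, rfl, h₁, h₂⟩ := List.sublist_append_iff.mp hsub
    rcases List.sublist_cons_iff.mp h₂ with h₂' | ⟨t, rfl, ht⟩
    · exact h₁.append h₂'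
    · by_cases hlen : t.length + 1 ≤ L
      · have : (a :: t).Sublist v₂ := (hL (a :: t) (by simpa using hlen)).mp h₂
        exact h₁.append this
      · have hlen₁ : s₁.length + 1 ≤ R := by
          simp [List.length_append] at hs
          omega
        have h₁a : (s₁ ++ [a]).Sublist v₁ :=
          (hR (s₁ ++ [a]) (by simp; omega)).mpr (h₁.append (List.Sublist.refl [a]))
        have heq : s₁ ++ a :: t = (s₁ ++ [a]) ++ t := by simp
        rw [heq]
        exact h₁a.append ht
  · intro hsub
    exact hsub.trans (del_sublist v₁ v₂ a)

theorem not_cong_del (v₁ v₂ : List A) (a : A) :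
    ¬ SimonCong (Rnat v₁ a + Lnat a v₂ + 1) (v₁ ++ [a] ++ v₂) (v₁ ++ v₂) := by
  set R := Rnat v₁ a with hRdef
  set L := Lnat a v₂ with hLdef
  -- right witness
  have hnr : ¬ SimonCong (R + 1) v₁ (v₁ ++ [a]) := fun h => by
    have := Rnat_max h; omega
  rw [SimonCong] at hnr
  push_neg at hnr
  obtain ⟨s, hslen, hsiff⟩ := hnr
  have hs1 : s.Sublist (v₁ ++ [a]) ∧ ¬ s.Sublist v₁ := by
    rcases hsiff with ⟨h1, h2⟩ | ⟨h1, h2⟩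
    · exact absurd (h1.trans (List.sublist_append_left v₁ [a])) h2
    · exact ⟨h2, h1⟩
  obtain ⟨x', s₂, rfl, hx'v, hs₂⟩ := List.sublist_append_iff.mp hs1.1
  have hs₂' : s₂ = [a] := by
    rcases List.sublist_singleton.mp hs₂ with h | h
    · exfalso; apply hs1.2; rw [h, List.append_nil]; exact hx'v
    · exact h
  subst hs₂'
  have hx'len : x'.length ≤ R := by
    have := hslen; simp [List.length_append] at this; omega
  obtain ⟨x, hx'x, hxv, hxlen⟩ := sublist_extend (R - x'.length) x' hx'v
    (by have := rb_bound (Rnat_spec v₁ a); omega)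
  have hxa : ¬ (x ++ [a]).Sublist v₁ := fun h =>
    hs1.2 ((hx'x.append (List.Sublist.refl [a])).trans h)
  -- left witness
  have hnl : ¬ SimonCong (L + 1) (a :: v₂) v₂ := fun h => by
    have := Lnat_max h; omega
  rw [SimonCong] at hnl
  push_neg at hnl
  obtain ⟨w, hwlen, hwiff⟩ := hnl
  have hw1 : w.Sublist (a :: v₂) ∧ ¬ w.Sublist v₂ := by
    rcases hwiff with ⟨h1, h2⟩ | ⟨h1, h2⟩
    · exact ⟨h1, h2⟩
    · exact absurd (h2.trans (List.sublist_cons_self a v₂)) h1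
  rcases List.sublist_cons_iff.mp hw1.1 with h | ⟨y', rfl, hy'v⟩
  · exact absurd h hw1.2
  have hy'len : y'.length ≤ L := by simp at hwlen; omega
  obtain ⟨y, hy'y, hyv, hylen⟩ := sublist_extend (L - y'.length) y' hy'v
    (by have := lb_bound (Lnat_spec a v₂); omega)
  have hay : ¬ (a :: y).Sublist v₂ := fun h => hw1.2 ((hy'y.cons₂ a).trans h)
  -- the distinguishing word
  intro hcong
  have hwsub : (x ++ [a] ++ y).Sublist (v₁ ++ [a] ++ v₂) :=
    (hxv.append (List.Sublist.refl [a])).append hyv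
  have hwlen' : (x ++ [a] ++ y).length ≤ R + L + 1 := by
    simp [List.length_append]; omega
  have hbad : (x ++ [a] ++ y).Sublist (v₁ ++ v₂) :=
    (hcong _ hwlen').mp hwsub
  obtain ⟨p, q, hpq, hp, hq⟩ := List.sublist_append_iff.mp hbad
  rw [List.append_assoc] at hpq
  rcases List.append_eq_append_iff.mp hpq with ⟨a', hpa, hay'⟩ | ⟨c', hxc, hqc⟩
  · -- p = x ++ a', [a] ++ y = a' ++ q
    rcases a' with _ | ⟨b, t⟩
    · simp only [List.nil_append, List.singleton_append] at hay'
      apply hay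
      rw [hay']
      exact hq
    · simp only [List.singleton_append, List.cons_append, List.cons.injEq] at hay'
      obtain ⟨hb, hy⟩ := hay'
      apply hxa
      refine List.Sublist.trans ?_ hp
      rw [hpa, ← hb]
      exact (List.Sublist.cons₂ a (List.nil_sublist t)).append_left x
  · -- x = p ++ c', q = c' ++ ([a] ++ y)
    apply hay
    have : (a :: y).Sublist q := by
      rw [hqc]
      exact List.sublist_append_right c' (a :: y)
    exact this.trans hq

theorem cong_del_iff {v₁ v₂ : List A} {a : A} {m : ℕ} :
    SimonCong m (v₁ ++ [a] ++ v₂) (v₁ ++ v₂) ↔ m ≤ Rnat v₁ a + Lnat a v₂ := by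
  constructor
  · intro h
    by_contra hm
    push_neg at hm
    exact not_cong_del v₁ v₂ a (simonCong_mono h (by omega))
  · intro hm
    exact simonCong_mono (cong_del (Rnat_spec v₁ a) (Lnat_spec a v₂)) hm

noncomputable def Mnat (u : List A) : ℕ :=
  sSup {m | ∃ (v₁ v₂ : List A) (a : A),
    u = v₁ ++ [a] ++ v₂ ∧ m = Rnat v₁ a + Lnat a v₂}

theorem Mne {u : List A} (hu : u ≠ []) :
    {m | ∃ (v₁ v₂ : List A) (a : A),
      u = v₁ ++ [a] ++ v₂ ∧ m = Rnat v₁ a + Lnat a v₂}.Nonempty := by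
  obtain ⟨b, l, rfl⟩ := List.exists_cons_of_ne_nil hu
  exact ⟨_, [], l, b, rfl, rfl⟩

theorem Mbdd (u : List A) :
    BddAbove {m | ∃ (v₁ v₂ : List A) (a : A),
      u = v₁ ++ [a] ++ v₂ ∧ m = Rnat v₁ a + Lnat a v₂} := by
  refine ⟨u.length, ?_⟩
  rintro m ⟨v₁, v₂, a, hfac, rfl⟩
  have h1 := rb_bound (Rnat_spec v₁ a)
  have h2 := lb_bound (Lnat_spec a v₂)
  have : u.length = v₁.length + 1 + v₂.length := by
    rw [hfac]; simp [List.length_append]; omega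
  omega

theorem reduced_iff {u : List A} (hu : u ≠ []) {m : ℕ} :
    Reduced m u ↔ Mnat u < m := by
  constructor
  · intro hred
    obtain ⟨v₁, v₂, a, hfac, hM⟩ := Nat.sSup_mem (Mne hu) (Mbdd u)
    have hM' : Mnat u = Rnat v₁ a + Lnat a v₂ := hM
    by_contra hc
    push_neg at hc
    have hcong : SimonCong m u (v₁ ++ v₂) := by
      rw [hfac]
      exact cong_del_iff.mpr (by omega)
    refine hred (v₁ ++ v₂) ?_ ?_ hcong
    · rw [hfac]; exact del_sublist v₁ v₂ a
    · intro he
      apply_fun List.length at he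
      rw [hfac] at he
      simp [List.length_append] at he
  · intro hM u' hsub hne hcong
    obtain ⟨v₁, a, v₂, hfac, hsub'⟩ := sublist_delete hsub hne
    have hcong' : SimonCong m u (v₁ ++ v₂) := by
      intro s hs
      constructor
      · intro h
        exact ((hcong s hs).mp h).trans hsub'
      · intro h
        rw [hfac]
        exact h.trans (del_sublist v₁ v₂ a)
    rw [hfac] at hcong'
    have h1 := cong_del_iff.mp hcong'
    have h2 : Rnat v₁ a + Lnat a v₂ ≤ Mnat u := le_csSup (Mbdd u) ⟨v₁, v₂, a, hfac, rfl⟩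
    omega

theorem pcRho_eq {u : List A} (hu : u ≠ []) : pcRho u = Mnat u + 1 := by
  have h : {m : ℕ | Reduced m u} = Set.Ici (Mnat u + 1) := by
    ext m
    rw [Set.mem_setOf_eq, reduced_iff hu, Set.mem_Ici]
    omega
  rw [pcRho, h]
  exact csInf_Ici

theorem rdist_eq (v : List A) (a : A) : rdist v [a] = (Rnat v a : ℕ∞) := by
  apply le_antisymm
  · apply sSup_le
    rintro d ⟨k, rfl, hk⟩
    exact_mod_cast Rnat_max hk
  · exact le_sSup ⟨Rnat v a, rfl, Rnat_spec v a⟩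

theorem ldist_eq (a : A) (v : List A) : ldist [a] v = (Lnat a v : ℕ∞) := by
  apply le_antisymm
  · apply sSup_le
    rintro d ⟨k, rfl, hk⟩
    exact_mod_cast Lnat_max hk
  · exact le_sSup ⟨Lnat a v, rfl, Lnat_spec a v⟩

end Aux

/-- characterisation of the piecewise minimality index `ρ(u)`. -/
theorem stmt1 {A : Type*} [Fintype A] (u : List A) (hu : u ≠ []) :
    (pcRho u : ℕ∞) =
      1 + sSup {d : ℕ∞ | ∃ (v₁ v₂ : List A) (a : A),
          u = v₁ ++ [a] ++ v₂ ∧ d = rdist v₁ [a] + ldist [a] v₂} := by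
  have hM : sSup {d : ℕ∞ | ∃ (v₁ v₂ : List A) (a : A),
      u = v₁ ++ [a] ++ v₂ ∧ d = rdist v₁ [a] + ldist [a] v₂} = (Mnat u : ℕ∞) := by
    apply le_antisymm
    · apply sSup_le
      rintro d ⟨v₁, v₂, a, hfac, rfl⟩
      rw [rdist_eq, ldist_eq, ← Nat.cast_add]
      exact_mod_cast le_csSup (Mbdd u) ⟨v₁, v₂, a, hfac, rfl⟩
    · obtain ⟨v₁, v₂, a, hfac, hMv⟩ := Nat.sSup_mem (Mne hu) (Mbdd u)
      have hMv' : Mnat u = Rnat v₁ a + Lnat a v₂ := hMv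
      apply le_sSup
      exact ⟨v₁, v₂, a, hfac, by rw [rdist_eq, ldist_eq, ← Nat.cast_add, hMv']⟩
  rw [hM, pcRho_eq hu, Nat.cast_add, Nat.cast_one, add_comm]
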